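/- Let G be a finite connected simple graph with positive real edge weights. A cutset D of G is relevant if and only if there exist two distinct vertices u and v of G such that D is a minimum-weight u,v-cut, i.e., D is a u,v-cut and every u,v-cut of G has weight at least the weight of D. -/

import Mathlib

open Finset
open scoped Classical

variable {V : Type*}

/-- The edge boundary `∂S`: the set of edges of `G` with exactly one endpoint in `S`. -/
noncomputable def edgeBoundary [Fintype V] [DecidableEq V] (G : SimpleGraph V) (S : Finset V) :
    Finset (Sym2 V) :=
  Finset.univ.filter fun e => e ∈ G.edgeSet ∧ ∃ u v, e = s(u, v) ∧ u ∈ S ∧ v ∉ S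

/-- A cutset of `G` is an edge boundary `∂S` with `∅ ≠ S ≠ V`. -/
def IsCutset [Fintype V] [DecidableEq V] (G : SimpleGraph V) (D : Finset (Sym2 V)) : Prop :=
  ∃ S : Finset V, S ≠ ∅ ∧ S ≠ Finset.univ ∧ D = edgeBoundary G S

/-- Symmetric difference of a finite family of edge sets: the set of edges occurring in an
odd number of members of the family. -/
noncomputable def symmDiffFamily [Fintype V] [DecidableEq V] {ι : Type*} (s : Finset ι)
    (f : ι → Finset (Sym2 V)) : Finset (Sym2 V) :=
  Finset.univ.filter fun e => Odd ((s.filter fun i => e ∈ f i).card)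

/-- A cut basis: a family of `n - 1` cutsets such that every element of the cut space is the
symmetric difference of a subfamily, and no nonempty subfamily has empty symmetric
difference. -/
def IsCutBasis [Fintype V] [DecidableEq V] (G : SimpleGraph V)
    (𝒟 : Finset (Finset (Sym2 V))) : Prop :=
  𝒟.card = Fintype.card V - 1 ∧
  (∀ D ∈ 𝒟, IsCutset G D) ∧
  (∀ S : Finset V, ∃ ℬ ⊆ 𝒟, edgeBoundary G S = symmDiffFamily ℬ id) ∧
  (∀ ℬ ⊆ 𝒟, ℬ.Nonempty → symmDiffFamily ℬ id ≠ ∅)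

/-- The weight `|D|` of an edge set `D`. -/
def weight (w : Sym2 V → ℝ) (D : Finset (Sym2 V)) : ℝ :=
  ∑ e ∈ D, w e

/-- A minimum cut basis: a cut basis of minimum total weight. -/
def IsMinCutBasis [Fintype V] [DecidableEq V] (G : SimpleGraph V) (w : Sym2 V → ℝ)
    (𝒟 : Finset (Finset (Sym2 V))) : Prop :=
  IsCutBasis G 𝒟 ∧
  ∀ 𝒟' : Finset (Finset (Sym2 V)), IsCutBasis G 𝒟' →
    ∑ D ∈ 𝒟, weight w D ≤ ∑ D ∈ 𝒟', weight w D

/-- A cutset is relevant if it belongs to at least one minimum cut basis. -/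
def IsRelevant [Fintype V] [DecidableEq V] (G : SimpleGraph V) (w : Sym2 V → ℝ)
    (D : Finset (Sym2 V)) : Prop :=
  ∃ 𝒟 : Finset (Finset (Sym2 V)), IsMinCutBasis G w 𝒟 ∧ D ∈ 𝒟

/-- A `u,v`-cut: a cutset of the form `∂S` with `u ∈ S` and `v ∉ S`. -/
def IsUVCut [Fintype V] [DecidableEq V] (G : SimpleGraph V) (u v : V)
    (D : Finset (Sym2 V)) : Prop :=
  ∃ S : Finset V, u ∈ S ∧ v ∉ S ∧ D = edgeBoundary G S

/-- A minimum-weight `u,v`-cut. -/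
def IsMinUVCut [Fintype V] [DecidableEq V] (G : SimpleGraph V) (w : Sym2 V → ℝ) (u v : V)
    (D : Finset (Sym2 V)) : Prop :=
  IsUVCut G u v D ∧ ∀ D' : Finset (Sym2 V), IsUVCut G u v D' → weight w D ≤ weight w D'

/-- A minimum `u,v`-cut with respect to unit weights (cardinality). -/
def IsMinUVCutCard [Fintype V] [DecidableEq V] (G : SimpleGraph V) (u v : V)
    (D : Finset (Sym2 V)) : Prop :=
  IsUVCut G u v D ∧ ∀ D' : Finset (Sym2 V), IsUVCut G u v D' → D.card ≤ D'.card

open scoped symmDiff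
section Aux

variable [Fintype V] [DecidableEq V] (G : SimpleGraph V)

lemma mem_edgeBoundary' {X : Finset V} {a b : V} :
    s(a, b) ∈ edgeBoundary G X ↔
      G.Adj a b ∧ ((a ∈ X ∧ b ∉ X) ∨ (b ∈ X ∧ a ∉ X)) := by
  classical
  simp only [edgeBoundary, Finset.mem_filter, Finset.mem_univ, true_and,
    SimpleGraph.mem_edgeSet]
  constructor
  · rintro ⟨hadj, u, v, huv, hu, hv⟩
    rw [Sym2.eq_iff] at huv
    rcases huv with ⟨rfl, rfl⟩ | ⟨rfl, rfl⟩
    · exact ⟨hadj, Or.inl ⟨hu, hv⟩⟩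
    · exact ⟨hadj, Or.inr ⟨hu, hv⟩⟩
  · rintro ⟨hadj, ⟨ha, hb⟩ | ⟨hb, ha⟩⟩
    · exact ⟨hadj, a, b, rfl, ha, hb⟩
    · exact ⟨hadj, b, a, by rw [Sym2.eq_swap], hb, ha⟩

lemma edgeBoundary_symmDiff (X Y : Finset V) :
    edgeBoundary G (X ∆ Y) = edgeBoundary G X ∆ edgeBoundary G Y := by
  ext e
  induction e using Sym2.ind with
  | _ a b =>
    simp only [Finset.mem_symmDiff, mem_edgeBoundary' G, Finset.mem_symmDiff]
    tauto

lemma edgeBoundary_compl (X : Finset V) :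
    edgeBoundary G Xᶜ = edgeBoundary G X := by
  ext e
  induction e using Sym2.ind with
  | _ a b =>
    simp only [mem_edgeBoundary' G, Finset.mem_compl]
    tauto

lemma edgeBoundary_empty : edgeBoundary G (∅ : Finset V) = ∅ := by
  ext e
  induction e using Sym2.ind with
  | _ a b => simp [mem_edgeBoundary' G]

lemma edgeBoundary_univ : edgeBoundary G (Finset.univ : Finset V) = ∅ := by
  ext e
  induction e using Sym2.ind with
  | _ a b => simp [mem_edgeBoundary' G]

lemma edgeBoundary_eq_empty (hG : G.Connected) {X : Finset V}
    (h : edgeBoundary G X = ∅) : X = ∅ ∨ X = Finset.univ := by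
  classical
  by_contra hcon
  push_neg at hcon
  obtain ⟨hne, hnu⟩ := hcon
  obtain ⟨x, hx⟩ := hne
  have : ∃ y, y ∉ X := by
    by_contra hy; push_neg at hy
    exact hnu (Finset.eq_univ_iff_forall.2 hy)
  obtain ⟨y, hy⟩ := this
  have key : ∀ a b : V, G.Walk a b → a ∈ X → b ∈ X := by
    intro a b p
    induction p with
    | nil => exact id
    | cons hadj p ih =>
      intro ha
      apply ih
      by_contra hc
      have : s(_, _) ∈ edgeBoundary G X := (mem_edgeBoundary' G).2 ⟨hadj, Or.inl ⟨ha, hc⟩⟩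
      rw [h] at this
      exact absurd this (Finset.notMem_empty _)
  obtain ⟨p⟩ := hG.preconnected x y
  exact hy (key x y p hx)

lemma edgeBoundary_eq_iff (hG : G.Connected) {X Y : Finset V}
    (h : edgeBoundary G X = edgeBoundary G Y) : X = Y ∨ X = Yᶜ := by
  classical
  have h2 : edgeBoundary G (X ∆ Y) = ∅ := by
    rw [edgeBoundary_symmDiff, h, symmDiff_self]; rfl
  rcases edgeBoundary_eq_empty G hG h2 with h3 | h3
  · left
    have := symmDiff_eq_bot.1 h3
    exact this
  · right
    ext z
    have hz := Finset.eq_univ_iff_forall.1 h3 z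
    simp only [Finset.mem_symmDiff] at hz
    simp only [Finset.mem_compl]
    tauto

lemma cutset_nonempty (hG : G.Connected) {X : Finset V} (h1 : X ≠ ∅)
    (h2 : X ≠ Finset.univ) : edgeBoundary G X ≠ ∅ := by
  intro h
  rcases edgeBoundary_eq_empty G hG h with h' | h' <;> [exact h1 h'; exact h2 h']

end Aux
section Aux2

variable [Fintype V] [DecidableEq V] (G : SimpleGraph V) (w : Sym2 V → ℝ)

lemma weight_eq_sum_ite (D : Finset (Sym2 V)) :
    weight w D = ∑ e : Sym2 V, if e ∈ D then w e else 0 := by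
  rw [weight, Finset.sum_ite_mem, Finset.univ_inter]

lemma weight_submodular (hw : ∀ e ∈ G.edgeSet, 0 ≤ w e) (A B : Finset V) :
    weight w (edgeBoundary G (A ∩ B)) + weight w (edgeBoundary G (A ∪ B)) ≤
      weight w (edgeBoundary G A) + weight w (edgeBoundary G B) := by
  classical
  rw [weight_eq_sum_ite, weight_eq_sum_ite, weight_eq_sum_ite, weight_eq_sum_ite,
    ← Finset.sum_add_distrib, ← Finset.sum_add_distrib]
  apply Finset.sum_le_sum
  intro e _
  induction e using Sym2.ind with
  | _ a b =>
    by_cases hadj : G.Adj a b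
    · have hw' : 0 ≤ w s(a, b) := hw _ hadj
      simp only [mem_edgeBoundary' G, Finset.mem_inter, Finset.mem_union]
      by_cases haA : a ∈ A <;> by_cases haB : a ∈ B <;> by_cases hbA : b ∈ A <;>
        by_cases hbB : b ∈ B <;>
        simp [hadj, haA, haB, hbA, hbB] <;> linarith
    · simp [mem_edgeBoundary' G, hadj]

lemma sdf_empty : symmDiffFamily (∅ : Finset (Finset (Sym2 V))) id = ∅ := by
  ext e
  simp [symmDiffFamily]

lemma sdf_insert {a : Finset (Sym2 V)} {s : Finset (Finset (Sym2 V))} (h : a ∉ s) :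
    symmDiffFamily (insert a s) id = a ∆ symmDiffFamily s id := by
  classical
  ext e
  simp only [symmDiffFamily, Finset.mem_filter, Finset.mem_univ, true_and,
    Finset.mem_symmDiff, Finset.filter_insert, id_eq]
  by_cases he : e ∈ a
  · have hnot : a ∉ s.filter (fun i => e ∈ i) := fun hc => h (Finset.mem_of_mem_filter _ hc)
    simp only [he, if_pos, Finset.card_insert_of_notMem hnot]
    rw [Nat.odd_add_one]
    tauto
  · simp [he]

lemma card_symmDiff_key {α : Type*} [DecidableEq α] (P Q : Finset α) :
    (P ∆ Q).card + 2 * (P ∩ Q).card = P.card + Q.card := by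
  have h1 : P ∆ Q = (P \ Q) ∪ (Q \ P) := by
    rw [symmDiff_def]; rfl
  have hd : Disjoint (P \ Q) (Q \ P) := disjoint_sdiff_sdiff
  have h2 : (P \ Q).card + (P ∩ Q).card = P.card := Finset.card_sdiff_add_card_inter P Q
  have h3 : (Q \ P).card + (Q ∩ P).card = Q.card := Finset.card_sdiff_add_card_inter Q P
  have h4 : (P ∆ Q).card = (P \ Q).card + (Q \ P).card := by
    rw [h1, Finset.card_union_of_disjoint hd]
  rw [Finset.inter_comm Q P] at h3
  omega

lemma odd_card_symmDiff {α : Type*} [DecidableEq α] (P Q : Finset α) :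
    Odd (P ∆ Q).card ↔ ¬ (Odd P.card ↔ Odd Q.card) := by
  have := card_symmDiff_key P Q
  rw [Nat.odd_iff, Nat.odd_iff, Nat.odd_iff]
  omega

lemma zmod2_eq_zero_iff (k : ℕ) : (k : ZMod 2) = 0 ↔ Even k := by
  constructor
  · intro h
    rcases Nat.even_or_odd k with he | ho
    · exact he
    · exfalso
      obtain ⟨m, rfl⟩ := ho
      push_cast at h
      have h2 : (2 : ZMod 2) = 0 := by decide
      rw [h2] at h
      simp at h
  · rintro ⟨m, rfl⟩
    push_cast
    have h2 : (2 : ZMod 2) = 0 := by decide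
    ring_nf
    rw [h2, mul_zero]

lemma zmod2_eq_one_iff (k : ℕ) : (k : ZMod 2) = 1 ↔ Odd k := by
  have hx : ∀ x : ZMod 2, x = 1 ↔ ¬ x = 0 := by decide
  rw [hx, zmod2_eq_zero_iff, Nat.not_even_iff_odd]

lemma zmod2_card_symmDiff {α : Type*} [DecidableEq α] (P Q : Finset α) :
    (((P ∆ Q).card : ℕ) : ZMod 2) = (P.card : ZMod 2) + (Q.card : ZMod 2) := by
  have h := card_symmDiff_key P Q
  have := congrArg (fun n : ℕ => (n : ZMod 2)) h
  push_cast at this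
  have h2 : (2 : ZMod 2) = 0 := by decide
  rw [h2, zero_mul, add_zero] at this
  exact this

end Aux2
section Aux3

variable [Fintype V] [DecidableEq V]

lemma sdf_index_symmDiff (𝒜 ℬ : Finset (Finset (Sym2 V))) :
    symmDiffFamily (𝒜 ∆ ℬ) id = symmDiffFamily 𝒜 id ∆ symmDiffFamily ℬ id := by
  classical
  ext e
  simp only [symmDiffFamily, Finset.mem_filter, Finset.mem_univ, true_and,
    Finset.mem_symmDiff, id_eq]
  have hfil : (𝒜 ∆ ℬ).filter (fun i => e ∈ i) =
      (𝒜.filter (fun i => e ∈ i)) ∆ (ℬ.filter (fun i => e ∈ i)) := by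
    ext x
    simp only [Finset.mem_filter, Finset.mem_symmDiff]
    tauto
  rw [hfil, odd_card_symmDiff]
  tauto

instance : Std.Commutative (α := Finset V) (· ∆ ·) := ⟨symmDiff_comm⟩
instance : Std.Associative (α := Finset V) (· ∆ ·) := ⟨symmDiff_assoc⟩

noncomputable def VF (r : Finset (Sym2 V) → Finset V) (𝒜 : Finset (Finset (Sym2 V))) :
    Finset V :=
  𝒜.fold (· ∆ ·) ∅ r

lemma VF_empty (r : Finset (Sym2 V) → Finset V) : VF r ∅ = ∅ := Finset.fold_empty

lemma VF_insert (r : Finset (Sym2 V) → Finset V) {a : Finset (Sym2 V)}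
    {𝒜 : Finset (Finset (Sym2 V))} (h : a ∉ 𝒜) :
    VF r (insert a 𝒜) = r a ∆ VF r 𝒜 := Finset.fold_insert h

lemma edgeBoundary_VF (G : SimpleGraph V) (r : Finset (Sym2 V) → Finset V)
    (𝒜 : Finset (Finset (Sym2 V))) (hr : ∀ E ∈ 𝒜, edgeBoundary G (r E) = E) :
    edgeBoundary G (VF r 𝒜) = symmDiffFamily 𝒜 id := by
  classical
  induction 𝒜 using Finset.induction_on with
  | empty => rw [VF_empty, sdf_empty, edgeBoundary_empty]
  | insert a s hnot ih =>
    rw [VF_insert r hnot, sdf_insert hnot, edgeBoundary_symmDiff,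
      hr a (Finset.mem_insert_self a s), ih (fun E hE => hr E (Finset.mem_insert_of_mem hE))]

lemma sep_VF (r : Finset (Sym2 V) → Finset V) {u v : V}
    (𝒜 : Finset (Finset (Sym2 V))) (h : ¬((u ∈ VF r 𝒜) ↔ (v ∈ VF r 𝒜))) :
    ∃ E ∈ 𝒜, ¬((u ∈ r E) ↔ (v ∈ r E)) := by
  classical
  induction 𝒜 using Finset.induction_on with
  | empty => rw [VF_empty] at h; simp at h
  | insert a s hnot ih =>
    rw [VF_insert r hnot] at h
    simp only [Finset.mem_symmDiff] at h
    by_cases hcase : ¬((u ∈ r a) ↔ (v ∈ r a))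
    · exact ⟨a, Finset.mem_insert_self a s, hcase⟩
    · push_neg at hcase
      have : ¬((u ∈ VF r s) ↔ (v ∈ VF r s)) := by tauto
      obtain ⟨E, hE, hsep⟩ := ih this
      exact ⟨E, Finset.mem_insert_of_mem hE, hsep⟩

lemma inter_symmDiff_right {α : Type*} [DecidableEq α] (A B Y : Finset α) :
    (A ∆ B) ∩ Y = (A ∩ Y) ∆ (B ∩ Y) := by
  ext x
  simp only [Finset.mem_inter, Finset.mem_symmDiff]
  tauto

lemma pr_VF (r : Finset (Sym2 V) → Finset V) (Y : Finset V)
    (𝒜 : Finset (Finset (Sym2 V))) :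
    ((VF r 𝒜 ∩ Y).card : ZMod 2) = ∑ E ∈ 𝒜, ((r E ∩ Y).card : ZMod 2) := by
  classical
  induction 𝒜 using Finset.induction_on with
  | empty => simp [VF_empty]
  | insert a s hnot ih =>
    rw [VF_insert r hnot, inter_symmDiff_right, zmod2_card_symmDiff,
      Finset.sum_insert hnot, ih]

lemma compl_eq_symmDiff_univ {α : Type*} [Fintype α] [DecidableEq α] (A : Finset α) :
    Aᶜ = Finset.univ ∆ A := by
  ext x
  simp only [Finset.mem_compl, Finset.mem_symmDiff, Finset.mem_univ]
  tauto

lemma pr_compl {α : Type*} [Fintype α] [DecidableEq α] (A Y : Finset α) :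
    ((Aᶜ ∩ Y).card : ZMod 2) = (Y.card : ZMod 2) + ((A ∩ Y).card : ZMod 2) := by
  rw [compl_eq_symmDiff_univ, inter_symmDiff_right, zmod2_card_symmDiff,
    Finset.univ_inter]

end Aux3
section Aux4

variable [Fintype V] [DecidableEq V] (G : SimpleGraph V)

lemma singleton_boundary_eq (hG : G.Connected) {v₀ a v : V} (ha : a ≠ v₀) (hv : v ≠ v₀)
    (h : edgeBoundary G {a} = edgeBoundary G {v}) : a = v := by
  rcases edgeBoundary_eq_iff G hG h with h' | h'
  · exact Finset.singleton_injective h'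
  · exfalso
    have : v₀ ∈ ({v}ᶜ : Finset V) := by
      simp only [Finset.mem_compl, Finset.mem_singleton]
      exact fun hc => hv hc.symm
    rw [← h'] at this
    simp only [Finset.mem_singleton] at this
    exact ha this.symm

lemma sdf_image_singletons (hG : G.Connected) {v₀ : V} (A : Finset V) (hA : v₀ ∉ A) :
    symmDiffFamily (A.image fun v => edgeBoundary G {v}) id = edgeBoundary G A := by
  classical
  induction A using Finset.induction_on with
  | empty => rw [Finset.image_empty, sdf_empty, edgeBoundary_empty]
  | insert a s hnot ih =>
    have hav₀ : a ≠ v₀ := fun hc => hA (by rw [hc]; exact Finset.mem_insert_self _ _)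
    have hsv₀ : v₀ ∉ s := fun hc => hA (Finset.mem_insert_of_mem hc)
    have hfresh : edgeBoundary G {a} ∉ s.image fun v => edgeBoundary G {v} := by
      intro hc
      obtain ⟨v, hv, hveq⟩ := Finset.mem_image.1 hc
      have hvv₀ : v ≠ v₀ := fun hc' => hsv₀ (hc' ▸ hv)
      exact hnot ((singleton_boundary_eq G hG hav₀ hvv₀ hveq.symm) ▸ hv)
    rw [Finset.image_insert, sdf_insert hfresh, ih hsv₀, ← edgeBoundary_symmDiff]
    congr 1
    ext x
    simp only [Finset.mem_symmDiff, Finset.mem_singleton, Finset.mem_insert]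
    constructor
    · rintro (⟨rfl, _⟩ | ⟨hx, _⟩) <;> tauto
    · rintro (rfl | hx)
      · exact Or.inl ⟨rfl, hnot⟩
      · exact Or.inr ⟨hx, fun hc => hnot (hc ▸ hx)⟩

lemma exists_cutBasis (hG : G.Connected) (hn : 2 ≤ Fintype.card V) :
    ∃ 𝒟, IsCutBasis G 𝒟 := by
  classical
  have hne : Nonempty V := Fintype.card_pos_iff.1 (by omega)
  obtain ⟨v₀⟩ := hne
  refine ⟨(Finset.univ.erase v₀).image fun v => edgeBoundary G {v}, ?_, ?_, ?_, ?_⟩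
  · rw [Finset.card_image_of_injOn, Finset.card_erase_of_mem (Finset.mem_univ v₀),
      Finset.card_univ]
    intro x hx y hy hxy
    exact singleton_boundary_eq G hG (Finset.mem_erase.1 hx).1 (Finset.mem_erase.1 hy).1 hxy
  · intro D hD
    obtain ⟨v, _, rfl⟩ := Finset.mem_image.1 hD
    refine ⟨{v}, Finset.singleton_ne_empty v, ?_, rfl⟩
    intro hc
    have := Finset.card_univ (α := V)
    rw [← hc, Finset.card_singleton] at this
    omega
  · intro X
    set X' := if v₀ ∈ X then Xᶜ else X with hX'
    have hv₀X' : v₀ ∉ X' := by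
      by_cases h : v₀ ∈ X <;> simp [hX', h]
    have hbd : edgeBoundary G X' = edgeBoundary G X := by
      by_cases h : v₀ ∈ X <;> simp only [hX', h, if_true, if_false]
      · exact edgeBoundary_compl G X
    refine ⟨X'.image fun v => edgeBoundary G {v}, ?_, ?_⟩
    · apply Finset.image_subset_image
      intro x hx
      exact Finset.mem_erase.2 ⟨fun hc => hv₀X' (hc ▸ hx), Finset.mem_univ x⟩
    · rw [sdf_image_singletons G hG X' hv₀X', hbd]
  · intro ℬ hℬ hne
    set A := (Finset.univ.erase v₀).filter (fun v => edgeBoundary G {v} ∈ ℬ) with hA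
    have hv₀A : v₀ ∉ A := by simp [hA]
    have himg : A.image (fun v => edgeBoundary G {v}) = ℬ := by
      apply Finset.Subset.antisymm
      · intro b hb
        obtain ⟨v, hv, rfl⟩ := Finset.mem_image.1 hb
        exact (Finset.mem_filter.1 hv).2
      · intro b hb
        have := hℬ hb
        obtain ⟨v, hv, rfl⟩ := Finset.mem_image.1 this
        exact Finset.mem_image.2 ⟨v, Finset.mem_filter.2 ⟨hv, hb⟩, rfl⟩
    have hAne : A ≠ ∅ := by
      obtain ⟨b, hb⟩ := hne
      rw [← himg] at hb
      obtain ⟨v, hv, _⟩ := Finset.mem_image.1 hb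
      intro hc
      rw [hc] at hv
      exact Finset.notMem_empty v hv
    have hAuniv : A ≠ Finset.univ := fun hc => hv₀A (hc ▸ Finset.mem_univ v₀)
    rw [← himg, sdf_image_singletons G hG A hv₀A]
    exact cutset_nonempty G hG hAne hAuniv

lemma exists_minCutBasis (w : Sym2 V → ℝ) (h : ∃ 𝒟, IsCutBasis G 𝒟) :
    ∃ 𝒟, IsMinCutBasis G w 𝒟 := by
  classical
  obtain ⟨𝒟₀, h₀⟩ := h
  obtain ⟨𝒟, hmem, hmin⟩ := Finset.exists_min_image
    (Finset.univ.filter fun 𝒟 => IsCutBasis G 𝒟) (fun 𝒟 => ∑ D ∈ 𝒟, weight w D)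
    ⟨𝒟₀, by simp [h₀]⟩
  exact ⟨𝒟, (Finset.mem_filter.1 hmem).2, fun 𝒟' h' => hmin 𝒟' (by simp [h'])⟩

end Aux4
section Aux5

variable [Fintype V] [DecidableEq V] (G : SimpleGraph V)

noncomputable def vrep (E : Finset (Sym2 V)) : Finset V :=
  if h : IsCutset G E then h.choose else ∅

lemma vrep_spec {E : Finset (Sym2 V)} (h : IsCutset G E) :
    vrep G E ≠ ∅ ∧ vrep G E ≠ Finset.univ ∧ edgeBoundary G (vrep G E) = E := by
  rw [vrep, dif_pos h]
  obtain ⟨h1, h2, h3⟩ := h.choose_spec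
  exact ⟨h1, h2, h3.symm⟩

lemma inter_symmDiff_left {α : Type*} [DecidableEq α] (A Y Y' : Finset α) :
    A ∩ (Y ∆ Y') = (A ∩ Y) ∆ (A ∩ Y') := by
  ext x
  simp only [Finset.mem_inter, Finset.mem_symmDiff]
  tauto

lemma zmod2_add_self (x : ZMod 2) : x + x = 0 := by revert x; decide

lemma exists_dual (hG : G.Connected) (hn : 2 ≤ Fintype.card V)
    (𝒟 : Finset (Finset (Sym2 V))) (hb : IsCutBasis G 𝒟) {D : Finset (Sym2 V)}
    (hD : D ∈ 𝒟) :
    ∃ Y : Finset V, Even Y.card ∧ Odd ((vrep G D ∩ Y).card) ∧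
      ∀ E ∈ 𝒟, E ≠ D → Even ((vrep G E ∩ Y).card) := by
  classical
  have hr : ∀ E ∈ 𝒟, edgeBoundary G (vrep G E) = E :=
    fun E hE => (vrep_spec G (hb.2.1 E hE)).2.2
  set Φ : Finset V → ({E // E ∈ 𝒟} → ZMod 2) × ZMod 2 :=
    fun Y => (fun E => ((vrep G E.1 ∩ Y).card : ZMod 2), (Y.card : ZMod 2)) with hΦ
  have hinj : Function.Injective Φ := by
    intro Y Y' hYY'
    have h1 : ∀ E ∈ 𝒟, ((vrep G E ∩ Y).card : ZMod 2) = ((vrep G E ∩ Y').card : ZMod 2) :=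
      fun E hE => congrFun (congrArg Prod.fst hYY') ⟨E, hE⟩
    have h2 : (Y.card : ZMod 2) = (Y'.card : ZMod 2) := congrArg Prod.snd hYY'
    set Z := Y ∆ Y' with hZdef
    have key1 : ∀ E ∈ 𝒟, ((vrep G E ∩ Z).card : ZMod 2) = 0 := by
      intro E hE
      rw [hZdef, inter_symmDiff_left, zmod2_card_symmDiff, ← h1 E hE, zmod2_add_self]
    have keyU : ((Z.card : ℕ) : ZMod 2) = 0 := by
      rw [hZdef, zmod2_card_symmDiff, ← h2, zmod2_add_self]
    have hZempty : Z = ∅ := by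
      by_contra hc
      obtain ⟨x, hxZ⟩ := Finset.nonempty_iff_ne_empty.2 hc
      obtain ⟨ℬ, hℬsub, hℬ⟩ := hb.2.2.1 {x}
      have hVF : edgeBoundary G (VF (vrep G) ℬ) = symmDiffFamily ℬ id :=
        edgeBoundary_VF G (vrep G) ℬ (fun E hE => hr E (hℬsub hE))
      have heq : edgeBoundary G {x} = edgeBoundary G (VF (vrep G) ℬ) := by
        rw [hVF, hℬ]
      have hsing : ((({x} : Finset V) ∩ Z).card : ZMod 2) = 1 := by
        have : ({x} : Finset V) ∩ Z = {x} := by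
          ext y
          simp only [Finset.mem_inter, Finset.mem_singleton]
          constructor
          · tauto
          · rintro rfl; exact ⟨rfl, hxZ⟩
        rw [this, Finset.card_singleton]
        rfl
      have hVFpr : ((VF (vrep G) ℬ ∩ Z).card : ZMod 2) = 0 := by
        rw [pr_VF]
        exact Finset.sum_eq_zero fun E hE => key1 E (hℬsub hE)
      rcases edgeBoundary_eq_iff G hG heq with h' | h'
      · rw [h'] at hsing
        rw [hVFpr] at hsing
        exact absurd hsing (by decide)
      · rw [h', pr_compl, hVFpr, add_zero, keyU] at hsing
        exact absurd hsing (by decide)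
    have : Y ∆ Y' = ⊥ := hZempty
    exact symmDiff_eq_bot.1 this
  have hcard : Fintype.card (Finset V) =
      Fintype.card (({E // E ∈ 𝒟} → ZMod 2) × ZMod 2) := by
    rw [Fintype.card_finset, Fintype.card_prod, Fintype.card_fun, ZMod.card,
      Fintype.card_coe, hb.1, ← pow_succ]
    congr 1
    omega
  have hbij : Function.Bijective Φ :=
    (Fintype.bijective_iff_injective_and_card Φ).2 ⟨hinj, hcard⟩
  obtain ⟨Y, hY⟩ := hbij.2 (fun E => if E.1 = D then 1 else 0, 0)
  refine ⟨Y, ?_, ?_, ?_⟩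
  · have := congrArg Prod.snd hY
    simp only [hΦ] at this
    exact (zmod2_eq_zero_iff _).1 this
  · have := congrFun (congrArg Prod.fst hY) ⟨D, hD⟩
    simp only [hΦ, if_pos rfl] at this
    exact (zmod2_eq_one_iff _).1 this
  · intro E hE hne
    have := congrFun (congrArg Prod.fst hY) ⟨E, hE⟩
    simp only [hΦ, if_neg hne] at this
    exact (zmod2_eq_zero_iff _).1 this

end Aux5
section Aux6

variable [Fintype V] [DecidableEq V] (G : SimpleGraph V)

lemma card_inter_split {α : Type*} [DecidableEq α] (X Y₁ Y : Finset α) (h : Y₁ ⊆ Y) :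
    (X ∩ Y₁).card + (X ∩ (Y \ Y₁)).card = (X ∩ Y).card := by
  rw [← Finset.card_union_of_disjoint]
  · congr 1
    ext x
    simp only [Finset.mem_union, Finset.mem_inter, Finset.mem_sdiff]
    constructor
    · intro hx
      rcases hx with ⟨h1, h2⟩ | ⟨h1, h2, h3⟩
      · exact ⟨h1, h h2⟩
      · exact ⟨h1, h2⟩
    · intro hx
      by_cases hy : x ∈ Y₁ <;> tauto
  · rw [Finset.disjoint_left]
    rintro x hx1 hx2
    exact (Finset.mem_sdiff.1 (Finset.mem_inter.1 hx2).2).2 (Finset.mem_inter.1 hx1).2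

lemma ne_empty_of_odd_inter {α : Type*} [DecidableEq α] {X Y : Finset α}
    (h : Odd ((X ∩ Y).card)) : X ≠ ∅ := by
  intro hc
  rw [hc, Finset.empty_inter, Finset.card_empty] at h
  simp [Nat.odd_iff] at h

lemma core_lemma (hG : G.Connected) (w : Sym2 V → ℝ)
    (hw0 : ∀ e ∈ G.edgeSet, 0 ≤ w e) (c : ℝ) :
    ∀ N : ℕ, ∀ Y : Finset V, Y.card ≤ N → Even Y.card →
    ∀ S : Finset V, Odd ((S ∩ Y).card) →
    (∀ u ∈ S ∩ Y, ∀ v ∈ Y \ S,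
      ∃ T : Finset V, u ∈ T ∧ v ∉ T ∧ weight w (edgeBoundary G T) < c) →
    ∃ T : Finset V, T ≠ ∅ ∧ T ≠ Finset.univ ∧ weight w (edgeBoundary G T) < c ∧
      Odd ((T ∩ Y).card) := by
  intro N
  induction N with
  | zero =>
    intro Y hYcard _ S hodd _
    have : Y = ∅ := Finset.card_eq_zero.1 (Nat.le_zero.1 hYcard)
    rw [this, Finset.inter_empty, Finset.card_empty] at hodd
    simp [Nat.odd_iff] at hodd
  | succ N ih =>
    intro Y hYcard hYeven S hodd hyp
    obtain ⟨u, hu⟩ : (S ∩ Y).Nonempty := by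
      apply Finset.card_pos.1
      rcases hodd with ⟨m, hm⟩
      omega
    obtain ⟨v, hv⟩ : (Y \ S).Nonempty := by
      apply Finset.card_pos.1
      have hkey : (Y \ S).card + (Y ∩ S).card = Y.card := Finset.card_sdiff_add_card_inter Y S
      rw [Finset.inter_comm] at hkey
      rw [Nat.odd_iff] at hodd
      rw [Nat.even_iff] at hYeven
      omega
    obtain ⟨T, huT, hvT, hTw⟩ := hyp u hu v hv
    by_cases hT : Odd ((T ∩ Y).card)
    · exact ⟨T, fun hc => by rw [hc] at huT; exact Finset.notMem_empty u huT,
        fun hc => hvT (hc ▸ Finset.mem_univ v), hTw, hT⟩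
    have hTeven : Even ((T ∩ Y).card) := Nat.not_odd_iff_even.1 hT
    have hYsdT : Y \ (T ∩ Y) = Y \ T := by
      ext x
      simp only [Finset.mem_sdiff, Finset.mem_inter]
      tauto
    have hsplitS : (S ∩ (T ∩ Y)).card + (S ∩ (Y \ T)).card = (S ∩ Y).card := by
      rw [← hYsdT]
      exact card_inter_split S (T ∩ Y) Y Finset.inter_subset_right
    have hTcYeq : Tᶜ ∩ Y = Y \ T := by
      ext x
      simp only [Finset.mem_inter, Finset.mem_compl, Finset.mem_sdiff]
      tauto
    have hYsplit : (Y \ T).card + (T ∩ Y).card = Y.card := by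
      have := Finset.card_sdiff_add_card_inter Y T
      rw [Finset.inter_comm Y T] at this
      exact this
    obtain ⟨T₀, hbd₀, hodd₀, heven₀, z, hzY, hzT₀⟩ :
        ∃ T₀ : Finset V, edgeBoundary G T₀ = edgeBoundary G T ∧
          Odd ((S ∩ (T₀ ∩ Y)).card) ∧ Even ((T₀ ∩ Y).card) ∧
          ∃ z, z ∈ Y ∧ z ∉ T₀ := by
      by_cases hparity : Odd ((S ∩ (T ∩ Y)).card)
      · exact ⟨T, rfl, hparity, hTeven, v, (Finset.mem_sdiff.1 hv).1, hvT⟩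
      · refine ⟨Tᶜ, edgeBoundary_compl G T, ?_, ?_, u, (Finset.mem_inter.1 hu).2, ?_⟩
        · rw [hTcYeq]
          rw [Nat.odd_iff] at hodd ⊢
          rw [Nat.odd_iff] at hparity
          omega
        · rw [hTcYeq]
          rw [Nat.even_iff] at hYeven hTeven ⊢
          omega
        · simp only [Finset.mem_compl, not_not]
          exact huT
    set Y₁ := T₀ ∩ Y with hY₁
    have hY₁sub : Y₁ ⊆ Y := Finset.inter_subset_right
    have hzY₁ : z ∉ Y₁ := fun hc => hzT₀ (Finset.mem_inter.1 hc).1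
    have hY₁lt : Y₁.card < Y.card := by
      apply Finset.card_lt_card
      rw [Finset.ssubset_iff_of_subset hY₁sub]
      exact ⟨z, hzY, hzY₁⟩
    obtain ⟨T', hT'ne, hT'nu, hT'w, hT'odd⟩ :=
      ih Y₁ (by omega) heven₀ S hodd₀ (by
        intro u' hu' v' hv'
        apply hyp
        · rcases Finset.mem_inter.1 hu' with ⟨h1, h2⟩
          exact Finset.mem_inter.2 ⟨h1, hY₁sub h2⟩
        · rcases Finset.mem_sdiff.1 hv' with ⟨h1, h2⟩
          exact Finset.mem_sdiff.2 ⟨hY₁sub h1, h2⟩)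
    by_cases hodd' : Odd ((T' ∩ Y).card)
    · exact ⟨T', hT'ne, hT'nu, hT'w, hodd'⟩
    have hsplitT' : (T' ∩ Y₁).card + (T' ∩ (Y \ Y₁)).card = (T' ∩ Y).card :=
      card_inter_split T' Y₁ Y hY₁sub
    have hT'Y₂odd : Odd ((T' ∩ (Y \ Y₁)).card) := by
      rw [Nat.odd_iff] at hT'odd ⊢
      rw [Nat.not_odd_iff_even, Nat.even_iff] at hodd'
      omega
    have hbd₀w : weight w (edgeBoundary G T₀) < c := by rw [hbd₀]; exact hTw
    have hsubmod := weight_submodular G w hw0 T₀ T'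
    rcases le_or_gt c (weight w (edgeBoundary G (T₀ ∩ T'))) with hge | hlt
    · -- use the union
      have hltu : weight w (edgeBoundary G (T₀ ∪ T')) < c := by linarith
      have htr : (T₀ ∪ T') ∩ Y = Y₁ ∪ (T' ∩ (Y \ Y₁)) := by
        ext x
        simp only [hY₁, Finset.mem_inter, Finset.mem_union, Finset.mem_sdiff]
        tauto
      have hdisj : Disjoint Y₁ (T' ∩ (Y \ Y₁)) := by
        rw [Finset.disjoint_left]
        rintro x hx1 hx2
        exact (Finset.mem_sdiff.1 (Finset.mem_inter.1 hx2).2).2 hx1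
      have htrodd : Odd (((T₀ ∪ T') ∩ Y).card) := by
        rw [htr, Finset.card_union_of_disjoint hdisj]
        rw [Nat.odd_iff] at hT'Y₂odd ⊢
        rw [Nat.even_iff] at heven₀
        omega
      refine ⟨T₀ ∪ T', ne_empty_of_odd_inter htrodd, ?_, hltu, htrodd⟩
      -- not univ
      have hYY₁ : (Y \ Y₁).card + Y₁.card = Y.card := by
        have := Finset.card_sdiff_add_card_inter Y Y₁
        rw [Finset.inter_eq_right.2 hY₁sub] at this
        exact this
      have hrest : ((Y \ Y₁) \ T').card + ((Y \ Y₁) ∩ T').card = (Y \ Y₁).card :=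
        Finset.card_sdiff_add_card_inter (Y \ Y₁) T'
      have hodd_rest : Odd (((Y \ Y₁) \ T').card) := by
        rw [Finset.inter_comm] at hrest
        rw [Nat.odd_iff] at hT'Y₂odd ⊢
        rw [Nat.even_iff] at hYeven heven₀
        omega
      obtain ⟨z', hz'⟩ : ((Y \ Y₁) \ T').Nonempty := by
        apply Finset.card_pos.1
        rcases hodd_rest with ⟨m, hm⟩
        omega
      intro hc
      rcases Finset.mem_sdiff.1 hz' with ⟨hz'1, hz'2⟩
      rcases Finset.mem_sdiff.1 hz'1 with ⟨hz'Y, hz'Y₁⟩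
      have : z' ∈ T₀ ∪ T' := hc ▸ Finset.mem_univ z'
      rcases Finset.mem_union.1 this with h' | h'
      · exact hz'Y₁ (Finset.mem_inter.2 ⟨h', hz'Y⟩)
      · exact hz'2 h'
    · -- use the intersection
      have htr : (T₀ ∩ T') ∩ Y = T' ∩ Y₁ := by
        ext x
        simp only [hY₁, Finset.mem_inter]
        tauto
      have htrodd : Odd (((T₀ ∩ T') ∩ Y).card) := by rw [htr]; exact hT'odd
      refine ⟨T₀ ∩ T', ne_empty_of_odd_inter htrodd, ?_, hlt, htrodd⟩
      intro hc
      exact hzT₀ (Finset.mem_inter.1 (hc ▸ Finset.mem_univ z)).1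

end Aux6
section Aux7

variable [Fintype V] [DecidableEq V] (G : SimpleGraph V)

lemma swap_basis {𝒟 : Finset (Finset (Sym2 V))} (hb : IsCutBasis G 𝒟)
    {B C : Finset (Sym2 V)} {ℬ : Finset (Finset (Sym2 V))}
    (hB : B ∈ 𝒟) (hC : IsCutset G C) (hℬ : ℬ ⊆ 𝒟)
    (hCval : C = symmDiffFamily ℬ id) (hBℬ : B ∈ ℬ) (hCnot : C ∉ 𝒟) :
    IsCutBasis G (insert C (𝒟.erase B)) := by
  classical
  have hCerase : C ∉ 𝒟.erase B := fun h => hCnot (Finset.mem_of_mem_erase h)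
  refine ⟨?_, ?_, ?_, ?_⟩
  · rw [Finset.card_insert_of_notMem hCerase, Finset.card_erase_of_mem hB]
    have hpos : 0 < 𝒟.card := Finset.card_pos.2 ⟨B, hB⟩
    have := hb.1
    omega
  · intro E hE
    rcases Finset.mem_insert.1 hE with rfl | hE'
    · exact hC
    · exact hb.2.1 E (Finset.mem_of_mem_erase hE')
  · intro X
    obtain ⟨ℬ₀, hℬ₀, hX⟩ := hb.2.2.1 X
    by_cases hBin : B ∈ ℬ₀
    · refine ⟨insert C (ℬ₀ ∆ ℬ), ?_, ?_⟩
      · intro x hx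
        rcases Finset.mem_insert.1 hx with rfl | hx'
        · exact Finset.mem_insert_self _ _
        · apply Finset.mem_insert_of_mem
          apply Finset.mem_erase.2
          have hx𝒟 : x ∈ 𝒟 := by
            rcases Finset.mem_symmDiff.1 hx' with ⟨h1, _⟩ | ⟨h1, _⟩
            · exact hℬ₀ h1
            · exact hℬ h1
          have hxB : x ≠ B := by
            rintro rfl
            rcases Finset.mem_symmDiff.1 hx' with ⟨_, h2⟩ | ⟨_, h2⟩
            · exact h2 hBℬ
            · exact h2 hBin
          exact ⟨hxB, hx𝒟⟩
      · have hCnotin : C ∉ ℬ₀ ∆ ℬ := by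
          intro hc
          apply hCnot
          rcases Finset.mem_symmDiff.1 hc with ⟨h1, _⟩ | ⟨h1, _⟩
          · exact hℬ₀ h1
          · exact hℬ h1
        rw [sdf_insert hCnotin, sdf_index_symmDiff, ← hX, ← hCval,
          symmDiff_comm (edgeBoundary G X) C, symmDiff_symmDiff_cancel_left]
    · refine ⟨ℬ₀, ?_, hX⟩
      intro x hx
      apply Finset.mem_insert_of_mem
      exact Finset.mem_erase.2 ⟨fun hc => hBin (hc ▸ hx), hℬ₀ hx⟩
  · intro 𝒜 h𝒜 h𝒜ne hzero
    by_cases hC𝒜 : C ∈ 𝒜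
    · have h𝒜' : 𝒜.erase C ⊆ 𝒟.erase B := by
        intro x hx
        rcases Finset.mem_erase.1 hx with ⟨hxC, hx𝒜⟩
        rcases Finset.mem_insert.1 (h𝒜 hx𝒜) with rfl | h'
        · exact absurd rfl hxC
        · exact h'
      have hins : 𝒜 = insert C (𝒜.erase C) := (Finset.insert_erase hC𝒜).symm
      rw [hins, sdf_insert (Finset.notMem_erase C 𝒜)] at hzero
      have hsdfval : symmDiffFamily (𝒜.erase C) id = C := by
        have : C ∆ symmDiffFamily (𝒜.erase C) id = ⊥ := hzero
        exact (symmDiff_eq_bot.1 this).symm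
      have hBmem : B ∈ (𝒜.erase C) ∆ ℬ := by
        rw [Finset.mem_symmDiff]
        right
        refine ⟨hBℬ, fun hc => ?_⟩
        exact (Finset.mem_erase.1 (h𝒜' hc)).1 rfl
      apply hb.2.2.2 ((𝒜.erase C) ∆ ℬ) ?_ ⟨B, hBmem⟩
      · rw [sdf_index_symmDiff, hsdfval, ← hCval, symmDiff_self]
        rfl
      · intro x hx
        rcases Finset.mem_symmDiff.1 hx with ⟨h1, _⟩ | ⟨h1, _⟩
        · exact Finset.mem_of_mem_erase (h𝒜' h1)
        · exact hℬ h1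
    · apply hb.2.2.2 𝒜 ?_ h𝒜ne hzero
      intro x hx
      rcases Finset.mem_insert.1 (h𝒜 hx) with rfl | h'
      · exact absurd hx hC𝒜
      · exact Finset.mem_of_mem_erase h'

end Aux7

/-- A cutset `D` of a finite connected simple graph with positive edge weights is
relevant iff it is a minimum-weight `u,v`-cut for some pair of distinct vertices `u, v`. -/
theorem relevant_iff_min_uv_cut [Fintype V] [DecidableEq V] (G : SimpleGraph V)
    (hG : G.Connected) (w : Sym2 V → ℝ) (hw : ∀ e ∈ G.edgeSet, 0 < w e)
    (D : Finset (Sym2 V)) (hD : IsCutset G D) :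
    IsRelevant G w D ↔ ∃ u v : V, u ≠ v ∧ IsMinUVCut G w u v D := by
  classical
  have hn : 2 ≤ Fintype.card V := by
    obtain ⟨S₀, hS₀ne, hS₀nu, _⟩ := hD
    obtain ⟨x, hx⟩ := Finset.nonempty_iff_ne_empty.2 hS₀ne
    have : ∃ y, y ∉ S₀ := by
      by_contra hy; push_neg at hy
      exact hS₀nu (Finset.eq_univ_iff_forall.2 hy)
    obtain ⟨y, hy⟩ := this
    exact Fintype.one_lt_card_iff.2 ⟨x, y, fun hc => hy (hc ▸ hx)⟩
  constructor
  · -- relevant → exists min uv cut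
    intro hrel
    by_contra hcon
    push_neg at hcon
    obtain ⟨𝒟, h𝒟min, hD𝒟⟩ := hrel
    set S := vrep G D with hSdef
    obtain ⟨hSne, hSnu, hSbd⟩ := vrep_spec G hD
    obtain ⟨Y, hYeven, hYodd, hYrest⟩ := exists_dual G hG hn 𝒟 h𝒟min.1 hD𝒟
    have hyp : ∀ u ∈ S ∩ Y, ∀ v ∈ Y \ S,
        ∃ T : Finset V, u ∈ T ∧ v ∉ T ∧ weight w (edgeBoundary G T) < weight w D := by
      intro u hu v hv
      obtain ⟨huS, _⟩ := Finset.mem_inter.1 hu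
      obtain ⟨_, hvS⟩ := Finset.mem_sdiff.1 hv
      have huv : u ≠ v := fun hc => hvS (hc ▸ huS)
      have hDuv : IsUVCut G u v D := ⟨S, huS, hvS, hSbd.symm⟩
      have hnmin := hcon u v huv
      rw [IsMinUVCut] at hnmin
      push_neg at hnmin
      obtain ⟨D', hD'cut, hD'w⟩ := hnmin hDuv
      obtain ⟨T, huT, hvT, hD'T⟩ := hD'cut
      exact ⟨T, huT, hvT, by rw [← hD'T]; exact hD'w⟩
    obtain ⟨T, hTne, hTnu, hTw, hTodd⟩ :=
      core_lemma G hG w (fun e he => le_of_lt (hw e he)) (weight w D) Y.card Y le_rfl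
        hYeven S hYodd hyp
    set C := edgeBoundary G T with hCdef
    have hCcut : IsCutset G C := ⟨T, hTne, hTnu, rfl⟩
    have hCneq : ∀ E ∈ 𝒟, E ≠ D → C ≠ E := by
      intro E hE hED hc
      have hEbd : edgeBoundary G (vrep G E) = E := (vrep_spec G (h𝒟min.1.2.1 E hE)).2.2
      have heq : edgeBoundary G T = edgeBoundary G (vrep G E) := by rw [hEbd, ← hc]
      have hEeven : Even ((vrep G E ∩ Y).card) := hYrest E hE hED
      rcases edgeBoundary_eq_iff G hG heq with h' | h'
      · rw [h'] at hTodd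
        exact (Nat.not_odd_iff_even.2 hEeven) hTodd
      · rw [h'] at hTodd
        have hcompl : (vrep G E)ᶜ ∩ Y = Y \ vrep G E := by
          ext z
          simp only [Finset.mem_inter, Finset.mem_compl, Finset.mem_sdiff]
          tauto
        rw [hcompl] at hTodd
        have hkey : (Y \ vrep G E).card + (Y ∩ vrep G E).card = Y.card :=
          Finset.card_sdiff_add_card_inter Y (vrep G E)
        rw [Finset.inter_comm] at hkey
        rw [Nat.odd_iff] at hTodd
        rw [Nat.even_iff] at hYeven hEeven
        omega
    have hC𝒟 : C ∉ 𝒟 := by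
      intro hc
      by_cases hCD : C = D
      · have : weight w C < weight w D := hTw
        rw [hCD] at this
        exact absurd this (lt_irrefl _)
      · exact hCneq C hc hCD rfl
    obtain ⟨ℬ, hℬsub, hℬval⟩ := h𝒟min.1.2.2.1 T
    have hr : ∀ E ∈ ℬ, edgeBoundary G (vrep G E) = E :=
      fun E hE => (vrep_spec G (h𝒟min.1.2.1 E (hℬsub hE))).2.2
    have hDℬ : D ∈ ℬ := by
      by_contra hDnot
      have hVF : edgeBoundary G (VF (vrep G) ℬ) = symmDiffFamily ℬ id :=
        edgeBoundary_VF G (vrep G) ℬ hr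
      have heq : edgeBoundary G T = edgeBoundary G (VF (vrep G) ℬ) := by
        rw [hVF, ← hℬval]
      have hsum : ∑ E ∈ ℬ, ((vrep G E ∩ Y).card : ZMod 2) = 0 :=
        Finset.sum_eq_zero fun E hE =>
          (zmod2_eq_zero_iff _).2 (hYrest E (hℬsub hE) (fun hc => hDnot (hc ▸ hE)))
      have hTpr : (((T ∩ Y).card : ℕ) : ZMod 2) = 1 := (zmod2_eq_one_iff _).2 hTodd
      rcases edgeBoundary_eq_iff G hG heq with h' | h'
      · rw [h', pr_VF, hsum] at hTpr
        exact absurd hTpr (by decide)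
      · rw [h', pr_compl, pr_VF, hsum, add_zero] at hTpr
        rw [(zmod2_eq_zero_iff Y.card).2 hYeven] at hTpr
        exact absurd hTpr (by decide)
    have hbasis' : IsCutBasis G (insert C (𝒟.erase D)) :=
      swap_basis G h𝒟min.1 hD𝒟 hCcut hℬsub hℬval hDℬ hC𝒟
    have hCerase : C ∉ 𝒟.erase D := fun h => hC𝒟 (Finset.mem_of_mem_erase h)
    have hsum1 : ∑ E ∈ insert C (𝒟.erase D), weight w E =
        weight w C + ∑ E ∈ 𝒟.erase D, weight w E := Finset.sum_insert hCerase
    have hsum2 : ∑ E ∈ 𝒟.erase D, weight w E + weight w D = ∑ E ∈ 𝒟, weight w E :=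
      Finset.sum_erase_add 𝒟 _ hD𝒟
    have hle := h𝒟min.2 _ hbasis'
    rw [hsum1] at hle
    have : weight w C < weight w D := hTw
    linarith
  · -- exists min uv cut → relevant
    rintro ⟨u, v, huv, hmin⟩
    obtain ⟨𝒟, h𝒟min⟩ := exists_minCutBasis G w (exists_cutBasis G hG hn)
    by_cases hD𝒟 : D ∈ 𝒟
    · exact ⟨𝒟, h𝒟min, hD𝒟⟩
    obtain ⟨S, huS, hvS, hDS⟩ := hmin.1
    obtain ⟨ℬ, hℬsub, hℬval⟩ := h𝒟min.1.2.2.1 S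
    have hr : ∀ E ∈ ℬ, edgeBoundary G (vrep G E) = E :=
      fun E hE => (vrep_spec G (h𝒟min.1.2.1 E (hℬsub hE))).2.2
    have hVF : edgeBoundary G (VF (vrep G) ℬ) = symmDiffFamily ℬ id :=
      edgeBoundary_VF G (vrep G) ℬ hr
    have heq : edgeBoundary G S = edgeBoundary G (VF (vrep G) ℬ) := by
      rw [hVF, ← hℬval]
    have hsepVF : ¬((u ∈ VF (vrep G) ℬ) ↔ (v ∈ VF (vrep G) ℬ)) := by
      rcases edgeBoundary_eq_iff G hG heq with h' | h'
      · rw [← h']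
        intro hiff
        exact hvS (hiff.1 huS)
      · have hcompl : VF (vrep G) ℬ = Sᶜ := by rw [h', compl_compl]
        rw [hcompl]
        simp only [Finset.mem_compl]
        intro hiff
        exact (hiff.2 hvS) huS
    obtain ⟨E, hEℬ, hEsep⟩ := sep_VF (vrep G) ℬ hsepVF
    have hEcut : IsUVCut G u v E := by
      by_cases hu' : u ∈ vrep G E
      · have hv' : v ∉ vrep G E := by tauto
        exact ⟨vrep G E, hu', hv', (hr E hEℬ).symm⟩
      · have hv' : v ∈ vrep G E := by tauto
        refine ⟨(vrep G E)ᶜ, Finset.mem_compl.2 hu', ?_, ?_⟩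
        · simp only [Finset.mem_compl, not_not]
          exact hv'
        · rw [edgeBoundary_compl]
          exact (hr E hEℬ).symm
    have hwE : weight w D ≤ weight w E := hmin.2 E hEcut
    have hDval : D = symmDiffFamily ℬ id := by rw [hDS, hℬval]
    have hbasis' : IsCutBasis G (insert D (𝒟.erase E)) :=
      swap_basis G h𝒟min.1 (hℬsub hEℬ) hD hℬsub hDval hEℬ hD𝒟
    refine ⟨insert D (𝒟.erase E), ⟨hbasis', ?_⟩, Finset.mem_insert_self _ _⟩
    intro 𝒟' h𝒟'
    have hDerase : D ∉ 𝒟.erase E := fun h => hD𝒟 (Finset.mem_of_mem_erase h)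
    have hsum1 : ∑ F ∈ insert D (𝒟.erase E), weight w F =
        weight w D + ∑ F ∈ 𝒟.erase E, weight w F := Finset.sum_insert hDerase
    have hsum2 : ∑ F ∈ 𝒟.erase E, weight w F + weight w E = ∑ F ∈ 𝒟, weight w F :=
      Finset.sum_erase_add 𝒟 _ (hℬsub hEℬ)
    have hle := h𝒟min.2 𝒟' h𝒟'
    rw [hsum1]
    linarith
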